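/- Let N ≥ 1 be an integer and b ∈ ℝ with b ≠ 0. Let z₁, …, z_N : ℝ → ℝ be differentiable functions such that z₁(s), …, z_N(s) are pairwise distinct for every s ∈ ℝ, let A : ℝ → ℝ and α : ℝ × ℝ → ℝ be arbitrary functions, and define γ(z, s) := b · ∏_{k=1}^{N} (z − z_k(s)). If for every z ∈ ℝ and every s ∈ ℝ one has ∂_s γ(z,s) = −2 A(s) γ(z,s) + 2 b z α(z, s), then for every k ∈ {1,…,N} and every s ∈ ℝ, z_k'(s) = −2 w_k(s) / ∏_{j≠k} ( z_k(s) − z_j(s) ), where w_k(s) := z_k(s) · α(z_k(s), s). -/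

import Mathlib

/-- Equations of motion for the separation variables under the stationary flow:
if `γ(z,s) = b ∏ₖ (z − zₖ(s))` satisfies
`∂ₛ γ(z,s) = −2 A(s) γ(z,s) + 2 b z α(z,s)` for all `z, s`, then each zero
`zₖ` obeys `zₖ' = −2 wₖ / ∏_{j≠k}(zₖ − zⱼ)` with `wₖ = zₖ α(zₖ, s)`. -/
theorem separation_variables_stationary_flow (N : ℕ) (hN : 1 ≤ N)
    (b : ℝ) (hb : b ≠ 0)
    (zf : Fin N → ℝ → ℝ) (hdiff : ∀ k, Differentiable ℝ (zf k))
    (hdistinct : ∀ s : ℝ, Function.Injective fun k => zf k s)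
    (A : ℝ → ℝ) (α : ℝ × ℝ → ℝ)
    (hflow : ∀ z s : ℝ,
      deriv (fun s' => b * ∏ k : Fin N, (z - zf k s')) s
        = -2 * A s * (b * ∏ k : Fin N, (z - zf k s)) + 2 * b * z * α (z, s)) :
    ∀ (k : Fin N) (s : ℝ),
      deriv (zf k) s
        = -2 * (zf k s * α (zf k s, s))
            / ∏ j ∈ Finset.univ.erase k, (zf k s - zf j s) := by
  intro k s
  set z := zf k s with hz
  set P := ∏ j ∈ Finset.univ.erase k, (zf k s - zf j s) with hP
  have hPne : P ≠ 0 := by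
    refine Finset.prod_ne_zero_iff.2 fun j hj => ?_
    have hjk : j ≠ k := (Finset.mem_erase.1 hj).1
    intro h
    exact hjk ((hdistinct s (by simpa using sub_eq_zero.1 h)).symm)
  -- derivative of each factor
  have hfac : ∀ j : Fin N, HasDerivAt (fun s' => z - zf j s') (-(deriv (zf j) s)) s := by
    intro j
    simpa using ((hdiff j).differentiableAt.hasDerivAt).const_sub z
  have hprod : HasDerivAt (fun s' => ∏ j : Fin N, (z - zf j s'))
      (∑ j : Fin N, (∏ i ∈ Finset.univ.erase j, (z - zf i s)) • (-(deriv (zf j) s))) s :=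
    HasDerivAt.fun_finsetProd (fun j _ => hfac j)
  -- the sum collapses: only j = k survives
  have hsum : (∑ j : Fin N, (∏ i ∈ Finset.univ.erase j, (z - zf i s)) • (-(deriv (zf j) s)))
      = P * (-(deriv (zf k) s)) := by
    rw [Finset.sum_eq_single k]
    · simp [hP, hz, smul_eq_mul]
    · intro j _ hjk
      have : (∏ i ∈ Finset.univ.erase j, (z - zf i s)) = 0 := by
        apply Finset.prod_eq_zero (i := k) (Finset.mem_erase.2 ⟨hjk.symm, Finset.mem_univ k⟩)
        simp [hz]
      simp [this]
    · simp
  have hder : deriv (fun s' => b * ∏ j : Fin N, (z - zf j s')) s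
      = b * (P * -(deriv (zf k) s)) := by
    rw [(hprod.const_mul b).deriv, hsum]
  have hzero : (∏ j : Fin N, (z - zf j s)) = 0 := by
    apply Finset.prod_eq_zero (Finset.mem_univ k)
    simp [hz]
  have hd := hflow z s
  rw [hder, hzero] at hd
  -- hd : b * (P * (-(deriv (zf k) s))) = -2 * A s * (b * 0) + 2 * b * z * α (z, s)
  have h1 : P * deriv (zf k) s = -2 * (z * α (z, s)) := by
    apply mul_left_cancel₀ hb
    linear_combination -hd
  rw [eq_div_iff hPne]
  linear_combination h1
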